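/- Let y, aⁱ, aʲ : ℝ → ℝ be differentiable and let γⁱ, γʲ ∈ ℝ with sin γⁱ ≠ 0, sin γʲ ≠ 0, aʲ nonvanishing, and cot γⁱ ≠ cot γʲ. Assume y + (aᵏ·y)' = aᵏ·y·cot γᵏ for k = i, j, and set yⱼ := aʲ·y / sin γʲ and aⁱⱼ := (aⁱ/aʲ − 1)/(cot γʲ − cot γⁱ). Then yⱼ + (aⁱⱼ·yⱼ)' = aⁱⱼ·yⱼ·cot γⁱ holds identically. (Theorem 3: if Cᵢ and Cⱼ meet the tangents of C under constant angles γⁱ ≠ γʲ, then C_{ij} = F(C, Cᵢ, Cⱼ) meets the tangents of Cⱼ under the angle γⁱ.) -/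

import Mathlib

/-- Theorem 3 of the paper: if `Cᵢ`, `Cⱼ` are loxodromes of `C` with
angles `γⁱ ≠ γʲ`, then the curve `C_{ij}` constructed by the tangential map is a
loxodrome of `Cⱼ` with angle `γⁱ`: the constraint (ya) holds for `yⱼ` and `aⁱⱼ`. -/
theorem loxodrome_preserved_by_tangential_map
    (y ai aj : ℝ → ℝ) (γi γj : ℝ)
    (hy : Differentiable ℝ y) (hai : Differentiable ℝ ai) (haj : Differentiable ℝ aj)
    (hγi : Real.sin γi ≠ 0) (hγj : Real.sin γj ≠ 0)
    (haj0 : ∀ t, aj t ≠ 0)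
    (hcot : Real.cos γi / Real.sin γi ≠ Real.cos γj / Real.sin γj)
    (hyai : ∀ t, y t + deriv (fun s => ai s * y s) t
      = ai t * y t * (Real.cos γi / Real.sin γi))
    (hyaj : ∀ t, y t + deriv (fun s => aj s * y s) t
      = aj t * y t * (Real.cos γj / Real.sin γj))
    (yj aij : ℝ → ℝ)
    (hyj : ∀ t, yj t = aj t * y t / Real.sin γj)
    (haij : ∀ t, aij t = (ai t / aj t - 1)
      / (Real.cos γj / Real.sin γj - Real.cos γi / Real.sin γi)) :
    ∀ t, yj t + deriv (fun s => aij s * yj s) t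
      = aij t * yj t * (Real.cos γi / Real.sin γi) := by
  intro t
  set ci := Real.cos γi / Real.sin γi with hci
  set cj := Real.cos γj / Real.sin γj with hcj
  have hD : cj - ci ≠ 0 := sub_ne_zero.mpr (Ne.symm hcot)
  have hfun : (fun s => aij s * yj s)
      = fun s => (ai s * y s - aj s * y s) / ((cj - ci) * Real.sin γj) := by
    funext s
    rw [haij, hyj]
    field_simp [haj0 s]
  have h1 : deriv (fun s => ai s * y s) t = ai t * y t * ci - y t := by
    have := hyai t; linarith
  have h2 : deriv (fun s => aj s * y s) t = aj t * y t * cj - y t := by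
    have := hyaj t; linarith
  have hderiv : deriv (fun s => aij s * yj s) t
      = (deriv (fun s => ai s * y s) t - deriv (fun s => aj s * y s) t)
        / ((cj - ci) * Real.sin γj) := by
    rw [hfun, deriv_div_const,
      deriv_fun_sub (f := fun s => ai s * y s) (g := fun s => aj s * y s) ((hai t).mul (hy t)) ((haj t).mul (hy t))]
  rw [hderiv, h1, h2, hyj t, haij t]
  field_simp [haj0 t]
  ring
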